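/- arXiv:1605.04156 — 5 statements merged into one kernel-verified Lean document; each statement's English description precedes it below -/
import Mathlib

section
/- Let x(t) = (Σ_{i=0}^n ω_i p_i B_i^n(t)) / (Σ_{i=0}^n ω_i B_i^n(t)) be a rational Bézier curve with all weights ω_i > 0, and let y(t) = Σ_{j=0}^m q_j B_j^m(t) be a Bézier curve. Then for all t ∈ [0,1], ‖x(t) − y(t)‖ ≤ max_{0≤i≤m+n} max over admissible j of ‖p_j − q_{i−j}‖, where the inner maximum is over max(0, i−m) ≤ j ≤ min(n, i). -/
open Finset

/-- The Bernstein basis polynomial `B_i^n(t) = C(n,i) t^i (1-t)^(n-i)`. -/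
noncomputable def bern (n i : ℕ) (t : ℝ) : ℝ := (n.choose i : ℝ) * t ^ i * (1 - t) ^ (n - i)

theorem rational_bezier_approx_error_bound (d m n : ℕ) (ω : ℕ → ℝ) (hω : ∀ i ≤ n, 0 < ω i)
    (p q : ℕ → EuclideanSpace ℝ (Fin d)) (t : ℝ) (ht : t ∈ Set.Icc (0:ℝ) 1) :
    ‖(∑ i ∈ range (n + 1), ω i * bern n i t)⁻¹ •
        (∑ i ∈ range (n + 1), (ω i * bern n i t) • p i)
      - ∑ j ∈ range (m + 1), bern m j t • q j‖₊
      ≤ (range (m + n + 1)).sup fun i =>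
          (Finset.Icc (i - m) (min n i)).sup fun j => ‖p j - q (i - j)‖₊ := by
  obtain ⟨ht0, ht1⟩ := ht
  set M : NNReal := (range (m + n + 1)).sup fun i =>
      (Finset.Icc (i - m) (min n i)).sup fun j => ‖p j - q (i - j)‖₊ with hM
  have hbern : ∀ N i : ℕ, 0 ≤ bern N i t := by
    intro N i
    unfold bern
    have h1 : (0:ℝ) ≤ 1 - t := by linarith
    positivity
  have hsum : ∀ N : ℕ, ∑ i ∈ range (N + 1), bern N i t = 1 := by
    intro N
    calc ∑ i ∈ range (N + 1), bern N i t
        = ∑ i ∈ range (N + 1), t ^ i * (1 - t) ^ (N - i) * (N.choose i : ℝ) := by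
          refine Finset.sum_congr rfl fun i _ => ?_
          unfold bern; ring
      _ = (t + (1 - t)) ^ N := (add_pow t (1 - t) N).symm
      _ = 1 := by rw [show t + (1 - t) = 1 by ring, one_pow]
  set b : ℕ → ℝ := fun i => ω i * bern n i t with hb
  set c : ℕ → ℝ := fun j => bern m j t with hc
  have hbnn : ∀ i ∈ range (n + 1), 0 ≤ b i := fun i hi =>
    mul_nonneg (hω i (Nat.lt_succ_iff.mp (mem_range.mp hi))).le (hbern n i)
  have hcnn : ∀ j, 0 ≤ c j := fun j => hbern m j
  set W : ℝ := ∑ i ∈ range (n + 1), b i with hW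
  have hWpos : 0 < W := by
    have h1 : (0:ℝ) < ∑ i ∈ range (n + 1), bern n i t := by rw [hsum]; norm_num
    obtain ⟨i, hi, hpos⟩ : ∃ i ∈ range (n + 1), 0 < bern n i t := by
      by_contra h
      push_neg at h
      have : ∑ i ∈ range (n + 1), bern n i t ≤ ∑ i ∈ range (n + 1), (0:ℝ) :=
        Finset.sum_le_sum fun i hi => h i hi
      simp at this; linarith
    exact Finset.sum_pos' hbnn ⟨i, hi,
      mul_pos (hω i (Nat.lt_succ_iff.mp (mem_range.mp hi))) hpos⟩
  have hpair : ∀ i ∈ range (n + 1), ∀ j ∈ range (m + 1), ‖p i - q j‖ ≤ (M : ℝ) := by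
    intro i hi j hj
    have hi' := Nat.lt_succ_iff.mp (mem_range.mp hi)
    have hj' := Nat.lt_succ_iff.mp (mem_range.mp hj)
    have hk : i + j ∈ range (m + n + 1) := mem_range.mpr (by omega)
    have hij : i ∈ Finset.Icc (i + j - m) (min n (i + j)) := by
      simp only [Finset.mem_Icc]; omega
    have h1 : (‖p i - q (i + j - i)‖₊ : NNReal) ≤
        (Finset.Icc (i + j - m) (min n (i + j))).sup fun j' => ‖p j' - q (i + j - j')‖₊ :=
      Finset.le_sup (f := fun j' => ‖p j' - q (i + j - j')‖₊) hij
    have h2 : ((Finset.Icc (i + j - m) (min n (i + j))).sup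
        fun j' => ‖p j' - q (i + j - j')‖₊) ≤ M :=
      Finset.le_sup (f := fun i => (Finset.Icc (i - m) (min n i)).sup
        fun j => ‖p j - q (i - j)‖₊) hk
    have := h1.trans h2
    rw [Nat.add_sub_cancel_left] at this
    exact_mod_cast this
  rw [← NNReal.coe_le_coe, coe_nnnorm]
  set A : EuclideanSpace ℝ (Fin d) := ∑ i ∈ range (n + 1), b i • p i with hA
  set B : EuclideanSpace ℝ (Fin d) := ∑ j ∈ range (m + 1), c j • q j with hB
  have hrw : W⁻¹ • A - B = W⁻¹ • (A - W • B) := by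
    rw [smul_sub, smul_smul, inv_mul_cancel₀ hWpos.ne', one_smul]
  have hAB : A - W • B =
      ∑ i ∈ range (n + 1), ∑ j ∈ range (m + 1), (b i * c j) • (p i - q j) := by
    have h1 : A = ∑ i ∈ range (n + 1), ∑ j ∈ range (m + 1), (b i * c j) • p i := by
      refine Finset.sum_congr rfl fun i _ => ?_
      rw [← Finset.sum_smul, ← Finset.mul_sum, hsum m, mul_one]
    have h2 : W • B = ∑ i ∈ range (n + 1), ∑ j ∈ range (m + 1), (b i * c j) • q j := by
      rw [hW, Finset.sum_smul]
      rw [Finset.sum_congr rfl fun i (_ : i ∈ range (n+1)) => Finset.smul_sum]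
      refine Finset.sum_congr rfl fun i _ => Finset.sum_congr rfl fun j _ => ?_
      rw [smul_smul]
    rw [h1, h2, ← Finset.sum_sub_distrib]
    refine Finset.sum_congr rfl fun i _ => ?_
    rw [← Finset.sum_sub_distrib]
    exact Finset.sum_congr rfl fun j _ => (smul_sub _ _ _).symm
  have hnorm : ‖A - W • B‖ ≤ W * (M : ℝ) := by
    rw [hAB]
    calc ‖∑ i ∈ range (n + 1), ∑ j ∈ range (m + 1), (b i * c j) • (p i - q j)‖
        ≤ ∑ i ∈ range (n + 1), ‖∑ j ∈ range (m + 1), (b i * c j) • (p i - q j)‖ :=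
          norm_sum_le _ _
      _ ≤ ∑ i ∈ range (n + 1), ∑ j ∈ range (m + 1), ‖(b i * c j) • (p i - q j)‖ :=
          Finset.sum_le_sum fun i _ => norm_sum_le _ _
      _ ≤ ∑ i ∈ range (n + 1), ∑ j ∈ range (m + 1), (b i * c j) * (M : ℝ) := by
          refine Finset.sum_le_sum fun i hi => Finset.sum_le_sum fun j hj => ?_
          rw [norm_smul, Real.norm_eq_abs,
            abs_of_nonneg (mul_nonneg (hbnn i hi) (hcnn j))]
          exact mul_le_mul_of_nonneg_left (hpair i hi j hj)
            (mul_nonneg (hbnn i hi) (hcnn j))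
      _ = W * (M : ℝ) := by
          rw [hW, Finset.sum_mul]
          refine Finset.sum_congr rfl fun i _ => ?_
          rw [← Finset.sum_mul, ← Finset.mul_sum, hsum m, mul_one]
  calc ‖W⁻¹ • A - B‖ = W⁻¹ * ‖A - W • B‖ := by
        rw [hrw, norm_smul, Real.norm_eq_abs, abs_of_nonneg (inv_nonneg.mpr hWpos.le)]
    _ ≤ W⁻¹ * (W * (M : ℝ)) :=
        mul_le_mul_of_nonneg_left hnorm (inv_nonneg.mpr hWpos.le)
    _ = (M : ℝ) := by field_simp
end

section
/- With the notation of the previous setting, for all t ∈ [0,1]: ‖x(t) − y(t)‖ ≤ max_{0≤i≤m+n} [ Σ_{j=max(0,i−m)}^{min(n,i)} k_{ij} ‖p_j − q_{i−j}‖ ] / [ Σ_{j=max(0,i−m)}^{min(n,i)} k_{ij} ], where k_{ij} = C(n,j) C(m,i−j) ω_j. -/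
open Finset

lemma bern_sum (n : ℕ) (t : ℝ) : ∑ i ∈ range (n+1), bern n i t = 1 := by
  have h := add_pow t (1-t) n
  simp only [add_sub_cancel, one_pow] at h
  rw [h]
  exact Finset.sum_congr rfl fun i _ => by unfold bern; ring

lemma bern_nonneg (n i : ℕ) {t : ℝ} (h0 : 0 ≤ t) (h1 : t ≤ 1) : 0 ≤ bern n i t := by
  have : 0 ≤ 1 - t := by linarith
  unfold bern; positivity

lemma sum_reindex {M : Type*} [AddCommMonoid M] (n m : ℕ) (f : ℕ → ℕ → M) :
    ∑ i ∈ range (n+1), ∑ j ∈ range (m+1), f i j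
    = ∑ s ∈ range (m+n+1), ∑ i ∈ Finset.Icc (s-m) (min n s), f i (s-i) := by
  rw [← Finset.sum_product']
  rw [show (∑ s ∈ range (m+n+1), ∑ i ∈ Finset.Icc (s-m) (min n s), f i (s-i))
      = ∑ x ∈ (range (m+n+1)).sigma (fun s => Finset.Icc (s-m) (min n s)), f x.2 (x.1 - x.2)
    from (Finset.sum_sigma _ _ (fun x : Σ _ : ℕ, ℕ => f x.2 (x.1 - x.2))).symm]
  apply Finset.sum_nbij' (i := fun p => (⟨p.1 + p.2, p.1⟩ : Σ _ : ℕ, ℕ))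
    (j := fun x => (x.2, x.1 - x.2))
  · rintro ⟨a, b⟩ h
    simp only [mem_product, mem_range] at h
    simp only [mem_sigma, mem_range, mem_Icc, le_min_iff]
    omega
  · rintro ⟨s, i⟩ h
    simp only [mem_sigma, mem_range, mem_Icc, le_min_iff] at h
    simp only [mem_product, mem_range]
    omega
  · rintro ⟨a, b⟩ h
    simp only [mem_product, mem_range] at h
    simp only [add_tsub_cancel_left]
  · rintro ⟨s, i⟩ h
    simp only [mem_sigma, mem_range, mem_Icc, le_min_iff] at h
    simp only [Sigma.mk.inj_iff]
    constructor
    · omega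
    · rfl
  · rintro ⟨a, b⟩ h
    simp only [mem_product, mem_range] at h
    simp only [add_tsub_cancel_left]

theorem rational_bezier_approx_weighted_error_bound (d m n : ℕ) (ω : ℕ → ℝ)
    (hω : ∀ i ≤ n, 0 < ω i)
    (p q : ℕ → EuclideanSpace ℝ (Fin d)) (t : ℝ) (ht : t ∈ Set.Icc (0:ℝ) 1) :
    ‖(∑ i ∈ range (n + 1), ω i * bern n i t)⁻¹ •
        (∑ i ∈ range (n + 1), (ω i * bern n i t) • p i)
      - ∑ j ∈ range (m + 1), bern m j t • q j‖
      ≤ (range (m + n + 1)).sup' nonempty_range_add_one (fun i =>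
          (∑ j ∈ Finset.Icc (i - m) (min n i),
              ((n.choose j : ℝ) * (m.choose (i - j)) * ω j) * ‖p j - q (i - j)‖)
          / (∑ j ∈ Finset.Icc (i - m) (min n i),
              (n.choose j : ℝ) * (m.choose (i - j)) * ω j)) := by
  obtain ⟨ht0, ht1⟩ := ht
  have hb : ∀ (N i : ℕ), 0 ≤ bern N i t := fun N i => bern_nonneg N i ht0 ht1
  set M := (range (m + n + 1)).sup' nonempty_range_add_one (fun i =>
          (∑ j ∈ Finset.Icc (i - m) (min n i),
              ((n.choose j : ℝ) * (m.choose (i - j)) * ω j) * ‖p j - q (i - j)‖)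
          / (∑ j ∈ Finset.Icc (i - m) (min n i),
              (n.choose j : ℝ) * (m.choose (i - j)) * ω j)) with hM
  set c : ℕ → ℝ := fun s => t ^ s * (1 - t) ^ (m + n - s) with hc
  set k : ℕ → ℕ → ℝ := fun s j => (n.choose j : ℝ) * (m.choose (s - j)) * ω j with hk
  have hc0 : ∀ s, 0 ≤ c s := fun s => by
    have : 0 ≤ 1 - t := by linarith
    simp only [hc]; positivity
  have hk0 : ∀ s, ∀ j ∈ Finset.Icc (s - m) (min n s), 0 ≤ k s j := by
    intro s j hj
    simp only [Finset.mem_Icc, le_min_iff] at hj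
    exact mul_nonneg (mul_nonneg (Nat.cast_nonneg _) (Nat.cast_nonneg _))
      (hω j hj.2.1).le
  have hS_pos : ∀ s ∈ range (m + n + 1), 0 < ∑ j ∈ Finset.Icc (s - m) (min n s), k s j := by
    intro s hs
    simp only [mem_range] at hs
    refine Finset.sum_pos' (hk0 s) ⟨min n s, ?_, ?_⟩
    · simp only [Finset.mem_Icc, le_min_iff]
      omega
    · have h1 : 0 < (n.choose (min n s) : ℝ) := by
        exact_mod_cast Nat.choose_pos (min_le_left n s)
      have h2 : 0 < (m.choose (s - min n s) : ℝ) := by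
        exact_mod_cast Nat.choose_pos (by omega)
      exact mul_pos (mul_pos h1 h2) (hω _ (min_le_left n s))
  have hW_pos : 0 < ∑ i ∈ range (n + 1), ω i * bern n i t := by
    have h1 : ∑ i ∈ range (n + 1), bern n i t = 1 := bern_sum n t
    have h2 : ∃ i ∈ range (n + 1), 0 < bern n i t := by
      by_contra h
      push_neg at h
      have : ∑ i ∈ range (n + 1), bern n i t ≤ 0 :=
        Finset.sum_nonpos fun i hi => h i hi
      linarith
    obtain ⟨i, hi, hbi⟩ := h2
    refine Finset.sum_pos' (fun j hj => ?_) ⟨i, hi, ?_⟩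
    · exact mul_nonneg (hω j (by simpa [Nat.lt_succ_iff] using hj)).le (hb n j)
    · exact mul_pos (hω i (by simpa [Nat.lt_succ_iff] using hi)) hbi
  have hprod : ∀ s ∈ range (m + n + 1), ∀ i ∈ Finset.Icc (s - m) (min n s),
      ω i * bern n i t * bern m (s - i) t = c s * k s i := by
    intro s hs i hi
    simp only [mem_range] at hs
    simp only [Finset.mem_Icc, le_min_iff] at hi
    have h1 : t ^ i * t ^ (s - i) = t ^ s := by
      rw [← pow_add]; congr 1; omega
    have h2 : (1 - t) ^ (n - i) * (1 - t) ^ (m - (s - i)) = (1 - t) ^ (m + n - s) := by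
      rw [← pow_add]; congr 1; omega
    simp only [hc, hk]
    unfold bern
    rw [← h1, ← h2]
    ring
  have hW_eq : (∑ i ∈ range (n + 1), ω i * bern n i t)
      = ∑ s ∈ range (m + n + 1), c s * ∑ j ∈ Finset.Icc (s - m) (min n s), k s j := by
    calc ∑ i ∈ range (n + 1), ω i * bern n i t
        = ∑ i ∈ range (n + 1), ∑ j ∈ range (m + 1), ω i * bern n i t * bern m j t := by
          refine Finset.sum_congr rfl fun i _ => ?_
          rw [← Finset.mul_sum, bern_sum, mul_one]
      _ = ∑ s ∈ range (m + n + 1), ∑ i ∈ Finset.Icc (s - m) (min n s),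
            ω i * bern n i t * bern m (s - i) t :=
          sum_reindex n m (fun i j => ω i * bern n i t * bern m j t)
      _ = ∑ s ∈ range (m + n + 1), ∑ i ∈ Finset.Icc (s - m) (min n s), c s * k s i := by
          refine Finset.sum_congr rfl fun s hs => Finset.sum_congr rfl fun i hi => ?_
          exact hprod s hs i hi
      _ = ∑ s ∈ range (m + n + 1), c s * ∑ j ∈ Finset.Icc (s - m) (min n s), k s j := by
          refine Finset.sum_congr rfl fun s _ => (Finset.mul_sum _ _ _).symm
  have hX : (∑ i ∈ range (n + 1), (ω i * bern n i t) • p i)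
      - (∑ i ∈ range (n + 1), ω i * bern n i t) • (∑ j ∈ range (m + 1), bern m j t • q j)
      = ∑ s ∈ range (m + n + 1), ∑ i ∈ Finset.Icc (s - m) (min n s),
          (c s * k s i) • (p i - q (s - i)) := by
    have e1 : (∑ i ∈ range (n + 1), (ω i * bern n i t) • p i)
        = ∑ i ∈ range (n + 1), ∑ j ∈ range (m + 1),
            (ω i * bern n i t * bern m j t) • p i := by
      refine Finset.sum_congr rfl fun i _ => ?_
      rw [← Finset.sum_smul, ← Finset.mul_sum, bern_sum, mul_one]
    have e2 : (∑ i ∈ range (n + 1), ω i * bern n i t) •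
          (∑ j ∈ range (m + 1), bern m j t • q j)
        = ∑ i ∈ range (n + 1), ∑ j ∈ range (m + 1),
            (ω i * bern n i t * bern m j t) • q j := by
      rw [Finset.sum_smul]
      refine Finset.sum_congr rfl fun i _ => ?_
      rw [Finset.smul_sum]
      refine Finset.sum_congr rfl fun j _ => ?_
      rw [smul_smul]
    rw [e1, e2, ← Finset.sum_sub_distrib]
    simp_rw [← Finset.sum_sub_distrib, ← smul_sub]
    rw [sum_reindex n m (fun i j => (ω i * bern n i t * bern m j t) • (p i - q j))]
    refine Finset.sum_congr rfl fun s hs => Finset.sum_congr rfl fun i hi => ?_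
    rw [hprod s hs i hi]
  have key : (∑ i ∈ range (n + 1), ω i * bern n i t)⁻¹ •
        (∑ i ∈ range (n + 1), (ω i * bern n i t) • p i)
      - ∑ j ∈ range (m + 1), bern m j t • q j
      = (∑ i ∈ range (n + 1), ω i * bern n i t)⁻¹ •
        ((∑ i ∈ range (n + 1), (ω i * bern n i t) • p i)
         - (∑ i ∈ range (n + 1), ω i * bern n i t) •
             (∑ j ∈ range (m + 1), bern m j t • q j)) := by
    rw [smul_sub, smul_smul, inv_mul_cancel₀ hW_pos.ne', one_smul]
  rw [key, hX, norm_smul, Real.norm_eq_abs, abs_of_pos (inv_pos.mpr hW_pos)]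
  have hA_le : ∀ s ∈ range (m + n + 1),
      (∑ j ∈ Finset.Icc (s - m) (min n s), k s j * ‖p j - q (s - j)‖)
        ≤ M * ∑ j ∈ Finset.Icc (s - m) (min n s), k s j := by
    intro s hs
    have h1 := Finset.le_sup' (f := fun i =>
          (∑ j ∈ Finset.Icc (i - m) (min n i),
              ((n.choose j : ℝ) * (m.choose (i - j)) * ω j) * ‖p j - q (i - j)‖)
          / (∑ j ∈ Finset.Icc (i - m) (min n i),
              (n.choose j : ℝ) * (m.choose (i - j)) * ω j)) hs
    rw [← hM] at h1
    have h2 := (div_le_iff₀ (hS_pos s hs)).mp h1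
    simpa only [hk] using h2
  calc (∑ i ∈ range (n + 1), ω i * bern n i t)⁻¹ *
        ‖∑ s ∈ range (m + n + 1), ∑ i ∈ Finset.Icc (s - m) (min n s),
          (c s * k s i) • (p i - q (s - i))‖
      ≤ (∑ i ∈ range (n + 1), ω i * bern n i t)⁻¹ *
          ((∑ i ∈ range (n + 1), ω i * bern n i t) * M) := by
        refine mul_le_mul_of_nonneg_left ?_ (inv_nonneg.mpr hW_pos.le)
        calc ‖∑ s ∈ range (m + n + 1), ∑ i ∈ Finset.Icc (s - m) (min n s),
              (c s * k s i) • (p i - q (s - i))‖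
            ≤ ∑ s ∈ range (m + n + 1), ‖∑ i ∈ Finset.Icc (s - m) (min n s),
                (c s * k s i) • (p i - q (s - i))‖ := norm_sum_le _ _
          _ ≤ ∑ s ∈ range (m + n + 1), ∑ i ∈ Finset.Icc (s - m) (min n s),
                ‖(c s * k s i) • (p i - q (s - i))‖ :=
              Finset.sum_le_sum fun s _ => norm_sum_le _ _
          _ = ∑ s ∈ range (m + n + 1), c s *
                ∑ i ∈ Finset.Icc (s - m) (min n s), k s i * ‖p i - q (s - i)‖ := by
              refine Finset.sum_congr rfl fun s hs => ?_
              rw [Finset.mul_sum]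
              refine Finset.sum_congr rfl fun i hi => ?_
              rw [norm_smul, Real.norm_eq_abs,
                abs_of_nonneg (mul_nonneg (hc0 s) (hk0 s i hi))]
              ring
          _ ≤ ∑ s ∈ range (m + n + 1), c s *
                (M * ∑ j ∈ Finset.Icc (s - m) (min n s), k s j) :=
              Finset.sum_le_sum fun s hs =>
                mul_le_mul_of_nonneg_left (hA_le s hs) (hc0 s)
          _ = (∑ s ∈ range (m + n + 1), c s *
                ∑ j ∈ Finset.Icc (s - m) (min n s), k s j) * M := by
              rw [Finset.sum_mul]
              exact Finset.sum_congr rfl fun s _ => by ring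
          _ = (∑ i ∈ range (n + 1), ω i * bern n i t) * M := by rw [← hW_eq]
    _ = M := by rw [← mul_assoc, inv_mul_cancel₀ hW_pos.ne', one_mul]
end

section
/- Let M = m−(r+s+2) and 0 ≤ k ≤ M. Then t^{r+1}(1−t)^{s+1} J_k^{(r+1,s+1)}(2t−1) = Σ_{i=0}^k Σ_{j=i}^{M+i−k} (−1)^{k+i} [C(k+r+1,i) C(k+s+1,k−i) C(M−k, j−i) / C(m, r+j+1)] B_{r+j+1}^m(t), expressing the weighted Jacobi polynomial in the Bernstein basis of degree m. -/
open Finset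

/-- The shifted Jacobi polynomial `J_k^(α,β)(2t-1)`, via the standard hypergeometric
expansion `P_k^(α,β)(x) = ∑ₛ C(k+α, k-s) C(k+β, s) ((x-1)/2)^s ((x+1)/2)^(k-s)`. -/
noncomputable def jacobiShift (k α β : ℕ) (t : ℝ) : ℝ :=
  ∑ s ∈ range (k + 1),
    ((k + α).choose (k - s) : ℝ) * ((k + β).choose s) * (t - 1) ^ s * t ^ (k - s)

theorem weighted_jacobi_in_bernstein_basis (m r s k : ℕ) (hm : r + s + 2 ≤ m)
    (hk : k ≤ m - (r + s + 2)) (t : ℝ) :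
    t ^ (r + 1) * (1 - t) ^ (s + 1) * jacobiShift k (r + 1) (s + 1) t
      = ∑ i ∈ range (k + 1), ∑ j ∈ Finset.Icc i (m - (r + s + 2) + i - k),
          (-1:ℝ) ^ (k + i) * ((k + r + 1).choose i) * ((k + s + 1).choose (k - i))
            * ((m - (r + s + 2) - k).choose (j - i)) / (m.choose (r + j + 1))
            * bern m (r + j + 1) t := by

  obtain ⟨M, rfl⟩ : ∃ M, m = r + s + 2 + M := ⟨m - (r + s + 2), by omega⟩
  have hMs : r + s + 2 + M - (r + s + 2) = M := by omega
  rw [hMs] at hk ⊢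
  -- RHS simplification
  have key : ∀ i ∈ range (k + 1),
      (∑ j ∈ Finset.Icc i (M + i - k),
          (-1:ℝ) ^ (k + i) * ((k + r + 1).choose i) * ((k + s + 1).choose (k - i))
            * ((M - k).choose (j - i)) / ((r + s + 2 + M).choose (r + j + 1))
            * bern (r + s + 2 + M) (r + j + 1) t)
      = (-1:ℝ) ^ (k + i) * ((k + r + 1).choose i) * ((k + s + 1).choose (k - i))
          * t ^ (r + 1 + i) * (1 - t) ^ (s + 1 + (k - i)) := by
    intro i hi
    rw [mem_range] at hi
    have hik : i ≤ k := by omega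
    rw [← Finset.Ico_add_one_right_eq_Icc, Finset.sum_Ico_eq_sum_range]
    have h1 : M + i - k + 1 - i = M - k + 1 := by omega
    rw [h1]
    have h2 : ∀ l ∈ range (M - k + 1),
        (-1:ℝ) ^ (k + i) * ((k + r + 1).choose i) * ((k + s + 1).choose (k - i))
            * ((M - k).choose (i + l - i)) / ((r + s + 2 + M).choose (r + (i + l) + 1))
            * bern (r + s + 2 + M) (r + (i + l) + 1) t
        = ((-1:ℝ) ^ (k + i) * ((k + r + 1).choose i) * ((k + s + 1).choose (k - i))
            * t ^ (r + 1 + i) * (1 - t) ^ (s + 1 + (k - i)))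
          * (((M - k).choose l : ℝ) * t ^ l * (1 - t) ^ (M - k - l)) := by
      intro l hl
      rw [mem_range] at hl
      have hl' : l ≤ M - k := by omega
      have hc : ((r + s + 2 + M).choose (r + 1 + i + l) : ℝ) ≠ 0 := by
        exact_mod_cast (Nat.choose_pos (show r + 1 + i + l ≤ r + s + 2 + M by omega)).ne'
      have hsub : i + l - i = l := by omega
      have hexp1 : r + (i + l) + 1 = (r + 1 + i) + l := by omega
      have hexp2 : r + s + 2 + M - (r + (i + l) + 1) = (s + 1 + (k - i)) + (M - k - l) := by
        omega
      rw [bern, hsub, hexp2, hexp1, pow_add, pow_add]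
      field_simp
      ring
    rw [Finset.sum_congr rfl h2, ← Finset.mul_sum]
    have hbin : (∑ l ∈ range (M - k + 1),
        ((M - k).choose l : ℝ) * t ^ l * (1 - t) ^ (M - k - l)) = 1 := by
      have h := add_pow t (1 - t) (M - k)
      have h1t : t + (1 - t) = 1 := by ring
      rw [h1t, one_pow] at h
      conv_rhs => rw [h]
      exact Finset.sum_congr rfl fun l _ => by ring
    rw [hbin, mul_one]
  rw [Finset.sum_congr rfl key]
  -- LHS simplification
  rw [jacobiShift, ← Finset.sum_range_reflect, Finset.mul_sum]
  refine Finset.sum_congr rfl fun i hi => ?_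
  rw [mem_range] at hi
  have hik : i ≤ k := by omega
  simp only [Nat.add_sub_cancel]
  have h3 : k - (k - i) = i := by omega
  have h4 : (t - 1) ^ (k - i) = (-1:ℝ) ^ (k - i) * (1 - t) ^ (k - i) := by
    rw [show t - 1 = -(1 - t) by ring, neg_pow]
  have h5 : (-1:ℝ) ^ (k + i) = (-1:ℝ) ^ (k - i) := by
    rw [show k + i = (k - i) + 2 * i by omega, pow_add, pow_mul]
    simp
  rw [h3, h4, h5, pow_add, pow_add]
  ring
end

section
/- For integers n, k, i, j, r, s, l with the appropriate ranges, ∫₀¹ t^{s+1}(1−t)^{r+1} J_j^{(r+1,s+1)}(2t−1) B_i^{n+k}(t) dt = Σ_{l=0}^j (−1)^{j+l} C(j+r+1, l) C(j+s+1, j−l) C(n+k, i) / [ (n+k+r+s+j+3) C(n+k+r+s+j+2, i+s+l+1) ]. -/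
open Finset intervalIntegral

lemma beta_nat (a b : ℕ) : ∫ t in (0:ℝ)..1, t ^ a * (1 - t) ^ b
    = (a.factorial * b.factorial : ℝ) / (a + b + 1).factorial := by
  induction b generalizing a with
  | zero =>
    simp only [pow_zero, mul_one, integral_pow, Nat.factorial_zero, Nat.cast_one,
      Nat.add_zero, Nat.factorial_succ]
    push_cast
    rw [one_pow, zero_pow (by omega)]
    field_simp
    norm_num
  | succ b ih =>
    have hcont : ∀ (p q : ℕ), IntervalIntegrable (fun t : ℝ => t ^ p * (1 - t) ^ q)
        MeasureTheory.volume 0 1 := fun p q =>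
      (Continuous.mul (continuous_pow p) ((continuous_const.sub continuous_id).pow q)).intervalIntegrable 0 1
    have hderiv : ∀ t ∈ Set.uIcc (0:ℝ) 1, HasDerivAt (fun t : ℝ => t ^ (a+1) * (1 - t) ^ (b+1))
        (((a:ℝ)+1) * (t ^ a * (1 - t) ^ (b+1)) - ((b:ℝ)+1) * (t ^ (a+1) * (1 - t) ^ b)) t := by
      intro t _
      have h1 : HasDerivAt (fun t : ℝ => t ^ (a+1)) (((a:ℝ)+1) * t ^ a) t := by
        simpa using hasDerivAt_pow (a+1) t
      have h2 : HasDerivAt (fun t : ℝ => (1 - t) ^ (b+1)) (-(((b:ℝ)+1) * (1 - t) ^ b)) t := by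
        have := (hasDerivAt_pow (b+1) (1 - t)).comp t ((hasDerivAt_const t (1:ℝ)).sub (hasDerivAt_id t))
        simp at this
        exact this
      have := h1.mul h2
      refine this.congr_deriv ?_
      push_cast
      ring
    have hint : ∫ t in (0:ℝ)..1,
        (((a:ℝ)+1) * (t ^ a * (1 - t) ^ (b+1)) - ((b:ℝ)+1) * (t ^ (a+1) * (1 - t) ^ b)) = 0 := by
      rw [integral_eq_sub_of_hasDerivAt hderiv
        (((hcont a (b+1)).const_mul _).sub ((hcont (a+1) b).const_mul _))]
      norm_num
    rw [integral_sub ((hcont a (b+1)).const_mul _) ((hcont (a+1) b).const_mul _),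
      integral_const_mul, integral_const_mul, sub_eq_zero] at hint
    have key : (∫ t in (0:ℝ)..1, t ^ a * (1 - t) ^ (b+1))
        = ((b:ℝ)+1) / ((a:ℝ)+1) * ∫ t in (0:ℝ)..1, t ^ (a+1) * (1 - t) ^ b := by
      field_simp
      linarith [hint]
    rw [key, ih (a+1)]
    have h1 : ((a+1+b+1).factorial : ℝ) ≠ 0 := by exact_mod_cast (a+1+b+1).factorial_ne_zero
    have h2 : (a + (b+1) + 1) = (a + 1 + b + 1) := by omega
    rw [h2, Nat.factorial_succ (a), Nat.factorial_succ b]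
    push_cast
    field_simp

theorem weighted_jacobi_bernstein_integral (n k i j r s : ℕ) (hi : i ≤ n + k) :
    ∫ t in (0:ℝ)..1,
        t ^ (s + 1) * (1 - t) ^ (r + 1) * jacobiShift j (r + 1) (s + 1) t * bern (n + k) i t
      = ∑ l ∈ range (j + 1),
          (-1:ℝ) ^ (j + l) * ((j + r + 1).choose l) * ((j + s + 1).choose (j - l))
            * ((n + k).choose i)
            / ((n + k + r + s + j + 3) * ((n + k + r + s + j + 2).choose (i + s + l + 1))) := by
  have hexp : ∀ t : ℝ, t ^ (s + 1) * (1 - t) ^ (r + 1) * jacobiShift j (r + 1) (s + 1) t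
      * bern (n + k) i t
      = ∑ p ∈ range (j + 1),
        ((-1:ℝ) ^ p * ((j + (r+1)).choose (j - p)) * ((j + (s+1)).choose p) * ((n + k).choose i))
          * (t ^ (i + s + (j - p) + 1) * (1 - t) ^ ((n + k - i) + r + p + 1)) := by
    intro t
    unfold jacobiShift bern
    rw [Finset.mul_sum, Finset.sum_mul]
    refine Finset.sum_congr rfl fun p _ => ?_
    have ht : (t - 1) ^ p = (-1:ℝ) ^ p * (1 - t) ^ p := by
      rw [show t - 1 = -(1 - t) by ring, neg_pow]
    rw [ht]
    ring
  simp only [hexp]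
  rw [integral_finset_sum (fun p _ => (Continuous.intervalIntegrable (by continuity) 0 1))]
  rw [← Finset.sum_range_reflect]
  refine Finset.sum_congr rfl fun p hp => ?_
  rw [Finset.mem_range] at hp
  have hpj : p ≤ j := by omega
  rw [integral_const_mul, beta_nat]
  have h11 : j + 1 - 1 - p = j - p := by omega
  have hjl : j - (j - p) = p := by omega
  rw [h11, hjl]
  have hsign : (-1:ℝ) ^ (j - p) = (-1:ℝ) ^ (j + p) := by
    rw [show j + p = (j - p) + 2 * p by omega, pow_add, pow_mul]
    norm_num
  set A := i + s + p + 1 with hA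
  set B := n + k - i + r + (j - p) + 1 with hB
  have hAB : A + B + 1 = n + k + r + s + j + 3 := by omega
  have hAN : A ≤ n + k + r + s + j + 2 := by omega
  have hNB : n + k + r + s + j + 2 - A = B := by omega
  have hc := Nat.choose_mul_factorial_mul_factorial hAN
  rw [hNB] at hc
  have hc' : ((n + k + r + s + j + 2).choose A : ℝ) * A.factorial * B.factorial
      = ((n + k + r + s + j + 2).factorial : ℝ) := by exact_mod_cast congrArg Nat.cast hc
  have hcN : (n + k + r + s + j + 3) * ((n + k + r + s + j + 2).choose A)
      * (A.factorial * B.factorial) = (n + k + r + s + j + 3).factorial := by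
    rw [show n + k + r + s + j + 3 = (n + k + r + s + j + 2) + 1 from rfl,
      Nat.factorial_succ (n + k + r + s + j + 2), ← hc]
    ring
  have hf3 : (((n + k + r + s + j + 3).factorial : ℕ) : ℝ) ≠ 0 := by
    exact_mod_cast (n + k + r + s + j + 3).factorial_ne_zero
  have hprod : (((n + k + r + s + j + 3 : ℕ)) : ℝ) * ((n + k + r + s + j + 2).choose A) ≠ 0 := by
    have := (Nat.choose_pos hAN).ne'
    positivity
  have hkey : (A.factorial : ℝ) * B.factorial / (A + B + 1).factorial
      = 1 / (((n + k + r + s + j + 3 : ℕ)) * ((n + k + r + s + j + 2).choose A)) := by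
    rw [hAB, div_eq_div_iff hf3 hprod, one_mul]
    exact_mod_cast (by rw [← hcN]; ring :
      A.factorial * B.factorial * ((n + k + r + s + j + 3) * ((n + k + r + s + j + 2).choose A))
        = (n + k + r + s + j + 3).factorial)
  rw [hsign, hkey]
  push_cast
  ring
end

section
/- Under the C^{(r,s)}-continuity condition between the rational Bézier curve x(t) = Σ P_i B_i^n(t) / Σ ω_i B_i^n(t) and the Bézier curve y(t) = Σ q_j B_j^m(t) (with ω_0 > 0, 0 < r+s < min(m,n)), the constrained control point q_r is uniquely determined by q_0, …, q_{r−1} via: q_r = (1/(ω_0 C(m,r))) { C(n,r) Δ^r P_0 − Σ_{i=0}^{r−1} [ C(m,i) C(n,r−i) ω_{r−i} q_i + (−1)^{r+i} C(m+n,r) C(r,i) C_i^0 ] }, where C_i^0 = Σ_{j=0}^i (C(m,j)C(n,i−j)/C(m+n,i)) ω_{i−j} q_j. I.e., with this choice of q_r, the k-th derivatives of the polynomial identity P(t) = ω(t)y(t) match at t = 0 for all k ≤ r. -/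
open Finset

noncomputable def Ssum (d m n : ℕ) (ω : ℕ → ℝ) (q : ℕ → EuclideanSpace ℝ (Fin d)) (a : ℕ) :
    EuclideanSpace ℝ (Fin d) :=
  ∑ j ∈ Finset.range (a+1), (ω (a-j) * (n.choose (a-j) : ℝ) * (m.choose j : ℝ)) • q j

noncomputable def gfun (a b : ℕ) : ℝ → ℝ := fun t => t ^ a * (1 - t) ^ b

lemma gfun_contDiff (a b : ℕ) : ContDiff ℝ ((⊤ : ℕ∞) : WithTop ℕ∞) (gfun a b) :=
  ((contDiff_id.pow a).mul ((contDiff_const.sub contDiff_id).pow b))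

lemma deriv_gfun (a b : ℕ) : deriv (gfun a b)
    = fun t => (a : ℝ) * gfun (a-1) b t - (b : ℝ) * gfun a (b-1) t := by
  funext t
  have h1 : HasDerivAt (fun t : ℝ => (1 - t) ^ b) ((b : ℝ) * (1 - t) ^ (b - 1) * (-1)) t :=
    ((hasDerivAt_id t).const_sub 1).pow b
  have h2 : HasDerivAt (gfun a b)
      ((a : ℝ) * t ^ (a-1) * (1 - t) ^ b + t ^ a * ((b : ℝ) * (1 - t) ^ (b - 1) * (-1))) t :=
    (hasDerivAt_pow a t).mul h1
  rw [h2.deriv]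
  simp only [gfun]; ring

lemma iteratedDeriv_comb {E : Type*} [NormedAddCommGroup E] [NormedSpace ℝ E]
    {ι κ : Type*} (s : Finset ι) (s' : Finset κ) (k : ℕ)
    (c : ι → ℝ → ℝ) (e : κ → ℝ → ℝ) (v : ι → E) (w : κ → E)
    (hc : ∀ i, ContDiff ℝ ((⊤ : ℕ∞) : WithTop ℕ∞) (c i)) (he : ∀ j, ContDiff ℝ ((⊤ : ℕ∞) : WithTop ℕ∞) (e j)) (x : ℝ) :
    iteratedDeriv k (fun t => (∑ i ∈ s, c i t • v i) - ∑ j ∈ s', e j t • w j) x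
      = (∑ i ∈ s, iteratedDeriv k (c i) x • v i) - ∑ j ∈ s', iteratedDeriv k (e j) x • w j := by
  induction k generalizing c e with
  | zero => simp [iteratedDeriv_zero]
  | succ k ih =>
    rw [iteratedDeriv_succ']
    have hd : deriv (fun t => (∑ i ∈ s, c i t • v i) - ∑ j ∈ s', e j t • w j)
        = fun t => (∑ i ∈ s, deriv (c i) t • v i) - ∑ j ∈ s', deriv (e j) t • w j := by
      funext t
      rw [deriv_fun_sub, deriv_fun_sum, deriv_fun_sum]
      · refine congrArg₂ _ (Finset.sum_congr rfl fun i _ => ?_) (Finset.sum_congr rfl fun j _ => ?_)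
        · exact deriv_smul_const (((hc i).differentiable (by simp)) t) _
        · exact deriv_smul_const (((he j).differentiable (by simp)) t) _
      · exact fun j _ => (((he j).differentiable (by simp)) t).smul_const _
      · exact fun i _ => (((hc i).differentiable (by simp)) t).smul_const _
      · exact Differentiable.differentiableAt <| Differentiable.fun_sum
          fun i _ => (((hc i).differentiable (by simp))).smul_const _
      · exact Differentiable.differentiableAt <| Differentiable.fun_sum
          fun j _ => (((he j).differentiable (by simp))).smul_const _
    rw [hd, ih (fun i => deriv (c i)) (fun j => deriv (e j))
      (fun i => (contDiff_infty_iff_deriv.mp (hc i)).2)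
      (fun j => (contDiff_infty_iff_deriv.mp (he j)).2)]
    simp only [iteratedDeriv_succ']

-- arithmetic recurrence
lemma descF_rec (k a b : ℕ) :
    (a : ℝ) * ((-1:ℝ)^(k-(a-1)) * (k.descFactorial (a-1)) * (b.descFactorial (k-(a-1))))
      - (b : ℝ) * ((-1:ℝ)^(k-a) * (k.descFactorial a) * ((b-1).descFactorial (k-a)))
    = (-1:ℝ)^(k+1-a) * ((k+1).descFactorial a) * (b.descFactorial (k+1-a)) := by
  have hbd : ∀ j : ℕ, (b : ℝ) * ((b-1).descFactorial j) = (b.descFactorial (j+1) : ℝ) := by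
    intro j
    cases b with
    | zero => simp [Nat.zero_descFactorial_succ]
    | succ b' => rw [Nat.succ_descFactorial_succ]; push_cast; ring
  cases a with
  | zero =>
    simp only [Nat.zero_sub, Nat.sub_zero, Nat.descFactorial_zero, Nat.cast_zero, Nat.cast_one]
    rw [← hbd k]
    rw [pow_succ]
    push_cast
    ring
  | succ a' =>
    rcases lt_trichotomy (a'+1) (k+1) with hlt | heq | hgt
    · -- a = a'+1 ≤ k
      have ha'k : a' < k := by omega
      have h1 : k - a' = (k - (a'+1)) + 1 := by omega
      have h2 : k + 1 - (a'+1) = (k - (a'+1)) + 1 := by omega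
      have h3 : (a'+1) - 1 = a' := by omega
      set j := k - (a'+1) with hj
      rw [h3, h1, h2]
      rw [← hbd j]
      have h5 : ((k+1).descFactorial (a'+1) : ℝ) = (k+1) * (k.descFactorial a') := by
        rw [Nat.succ_descFactorial_succ]; push_cast; ring
      have h6 : (k.descFactorial (a'+1) : ℝ) = (j+1) * (k.descFactorial a') := by
        rw [Nat.descFactorial_succ, show k - a' = j + 1 from h1]; push_cast; ring
      rw [h5, h6, pow_succ]
      have hk1 : ((k:ℝ)+1) = (a'+1) + (j+1) := by
        have : k + 1 = (a'+1) + (j+1) := by omega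
        exact_mod_cast this
      push_cast
      linear_combination ((-1:ℝ)^j * ((k.descFactorial a' : ℝ)) * ((b:ℝ) * (((b-1).descFactorial j : ℝ)))) * hk1
    · -- a = k+1
      obtain rfl : k = a' := by omega
      rw [show (k+1) - 1 = k from by omega, show k - k = 0 from by omega,
        show k - (k+1) = 0 from by omega, show k + 1 - (k+1) = 0 from by omega,
        show (k.descFactorial (k+1) : ℝ) = 0 from by
          rw [Nat.descFactorial_eq_zero_iff_lt.mpr (by omega)]; simp,
        show ((k+1).descFactorial (k+1) : ℝ) = ((k+1) : ℝ) * (k.descFactorial k) from by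
          rw [Nat.succ_descFactorial_succ]; push_cast; ring]
      simp
    · -- a > k+1
      rw [show ((k+1).descFactorial (a'+1) : ℝ) = 0 from by
          rw [Nat.descFactorial_eq_zero_iff_lt.mpr (by omega)]; simp,
        show (k.descFactorial (a'+1) : ℝ) = 0 from by
          rw [Nat.descFactorial_eq_zero_iff_lt.mpr (by omega)]; simp,
        show (k.descFactorial ((a'+1) - 1) : ℝ) = 0 from by
          rw [Nat.descFactorial_eq_zero_iff_lt.mpr (by omega)]; simp]
      ring

lemma iteratedDeriv_gfun (k : ℕ) : ∀ a b : ℕ,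
    iteratedDeriv k (gfun a b) 0
      = (-1:ℝ)^(k-a) * (k.descFactorial a) * (b.descFactorial (k-a)) := by
  induction k with
  | zero =>
    intro a b
    cases a with
    | zero => simp [gfun, iteratedDeriv_zero]
    | succ a' => simp [gfun, iteratedDeriv_zero]
  | succ k ih =>
    intro a b
    rw [iteratedDeriv_succ', deriv_gfun]
    have hrw : (fun t => (a : ℝ) * gfun (a-1) b t - (b : ℝ) * gfun a (b-1) t)
        = fun t => (∑ i ∈ ({0} : Finset ℕ), gfun (a-1) b t • (a:ℝ))
            - ∑ j ∈ ({0} : Finset ℕ), gfun a (b-1) t • (b:ℝ) := by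
      funext t; simp [smul_eq_mul, mul_comm]
    rw [hrw, iteratedDeriv_comb _ _ _ _ _ _ _
      (fun _ => gfun_contDiff _ _) (fun _ => gfun_contDiff _ _)]
    simp only [Finset.sum_singleton, ih, smul_eq_mul]
    rw [mul_comm, mul_comm _ ((b:ℝ))] at *
    exact descF_rec k a b
lemma nat_id {i k N : ℕ} (h1 : i ≤ k) (h2 : k ≤ N) :
    k.descFactorial i * ((N-i).descFactorial (k-i)) * N.choose i
      = k.factorial * k.choose i * N.choose k := by
  have hA := Nat.choose_mul (n := N) h1
  have hB := Nat.choose_mul_factorial_mul_factorial h1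
  calc k.descFactorial i * ((N-i).descFactorial (k-i)) * N.choose i
      = (Nat.factorial i * k.choose i) * ((Nat.factorial (k-i)) * (N-i).choose (k-i)) * N.choose i := by
        rw [Nat.descFactorial_eq_factorial_mul_choose, Nat.descFactorial_eq_factorial_mul_choose]
    _ = (k.choose i * Nat.factorial i * Nat.factorial (k-i)) * (N.choose i * (N-i).choose (k-i)) := by ring
    _ = k.factorial * (N.choose k * k.choose i) := by rw [hB, ← hA]
    _ = k.factorial * k.choose i * N.choose k := by ring



/-- With the constrained control points `q_0, …, q_r` chosen by formula (8) of the paper,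
the numerator identity `P(t) - ω(t) y(t)` has vanishing derivatives at `t = 0` up to
order `r`, i.e. the rational Bézier curve and the Bézier curve meet with
`C^(r,·)`-continuity at `t = 0`. -/
theorem constrained_control_points_at_zero (d m n r s : ℕ)
    (hrs : 0 < r + s) (hrs' : r + s < min m n)
    (ω : ℕ → ℝ) (hω : ∀ i ≤ n, 0 < ω i)
    (p q : ℕ → EuclideanSpace ℝ (Fin d))
    (hq : ∀ k ≤ r, q k = (ω 0 * (m.choose k : ℝ))⁻¹ •
      ((n.choose k : ℝ) •
          (∑ i ∈ range (k + 1), ((-1:ℝ) ^ (k - i) * (k.choose i)) • (ω i • p i))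
        - ∑ i ∈ range k,
            (((m.choose i : ℝ) * (n.choose (k - i)) * ω (k - i)) • q i
              + ((-1:ℝ) ^ (k + i) * ((m + n).choose k) * (k.choose i)) •
                  (∑ j ∈ range (i + 1),
                    ((m.choose j : ℝ) * (n.choose (i - j)) / ((m + n).choose i) * ω (i - j))
                      • q j)))) :
    ∀ k ≤ r,
      iteratedDeriv k
        (fun t => (∑ i ∈ range (n + 1), bern n i t • (ω i • p i))
          - (∑ i ∈ range (n + 1), ω i * bern n i t) •
              ∑ j ∈ range (m + 1), bern m j t • q j) 0 = 0 := by
  intro k hk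
  have hkm : k < m := by omega
  have hkn : k < n := by omega
  have hF : (fun t : ℝ => (∑ i ∈ range (n + 1), bern n i t • (ω i • p i))
          - (∑ i ∈ range (n + 1), ω i * bern n i t) •
              ∑ j ∈ range (m + 1), bern m j t • q j)
      = fun t => (∑ i ∈ range (n+1), gfun i (n-i) t • ((n.choose i : ℝ) • (ω i • p i)))
        - ∑ x ∈ range (n+1) ×ˢ range (m+1),
            gfun (x.1 + x.2) ((n - x.1) + (m - x.2)) t •
              ((ω x.1 * (n.choose x.1 : ℝ) * (m.choose x.2 : ℝ)) • q x.2) := by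
    funext t
    congr 1
    · refine Finset.sum_congr rfl fun i _ => ?_
      rw [show bern n i t = (n.choose i : ℝ) * gfun i (n-i) t from by
        simp [bern, gfun, mul_assoc]]
      rw [mul_comm, mul_smul]
    · rw [Finset.sum_product, Finset.sum_smul]
      refine Finset.sum_congr rfl fun i _ => ?_
      rw [Finset.smul_sum]
      refine Finset.sum_congr rfl fun j _ => ?_
      rw [smul_smul, smul_smul]
      congr 1
      simp only [bern, gfun, pow_add]
      ring
  rw [hF, iteratedDeriv_comb (range (n+1)) (range (n+1) ×ˢ range (m+1)) k
    (fun i t => gfun i (n-i) t) (fun x t => gfun (x.1 + x.2) ((n - x.1) + (m - x.2)) t)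
    (fun i => (n.choose i : ℝ) • (ω i • p i))
    (fun x => (ω x.1 * (n.choose x.1 : ℝ) * (m.choose x.2 : ℝ)) • q x.2)
    (fun i => gfun_contDiff _ _) (fun x => gfun_contDiff _ _) 0]
  simp only [iteratedDeriv_gfun]
  rw [sub_eq_zero]
  have hω0 : ω 0 ≠ 0 := ne_of_gt (hω 0 (Nat.zero_le n))
  have hc : (ω 0 * (m.choose k : ℝ)) ≠ 0 :=
    mul_ne_zero hω0 (Nat.cast_ne_zero.mpr (Nat.choose_pos hkm.le).ne')
  -- Claim 1 : left sum
  have hL : ∑ i ∈ range (n+1),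
        ((-1:ℝ)^(k-i) * (k.descFactorial i : ℝ) * ((n-i).descFactorial (k-i) : ℝ)) •
          ((n.choose i : ℝ) • (ω i • p i))
      = ((k.factorial : ℝ) * (n.choose k : ℝ)) •
          ∑ i ∈ range (k+1), ((-1:ℝ)^(k-i) * (k.choose i : ℝ)) • (ω i • p i) := by
    rw [Finset.smul_sum,
      ← Finset.sum_subset (Finset.range_subset_range.mpr (by omega : k+1 ≤ n+1)) (by
        intro x hx hxn
        have hxk : k < x := by
          simp only [mem_range] at hx hxn; omega
        rw [Nat.descFactorial_eq_zero_iff_lt.mpr hxk]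
        simp)]
    refine Finset.sum_congr rfl fun i hi => ?_
    have hik : i ≤ k := by
      have := mem_range.mp hi; omega
    simp only [smul_smul]
    congr 1
    have hcast := congrArg (Nat.cast (R := ℝ)) (nat_id hik hkn.le)
    push_cast at hcast
    linear_combination ((-1:ℝ)^(k-i) * ω i) * hcast
  -- Claim 2 : right sum as sum over a of S a
  have hR : ∑ x ∈ range (n+1) ×ˢ range (m+1),
        ((-1:ℝ)^(k-(x.1+x.2)) * (k.descFactorial (x.1+x.2) : ℝ) *
            (((n-x.1)+(m-x.2)).descFactorial (k-(x.1+x.2)) : ℝ)) •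
          ((ω x.1 * (n.choose x.1 : ℝ) * (m.choose x.2 : ℝ)) • q x.2)
      = ∑ a ∈ range (k+1),
          ((-1:ℝ)^(k-a) * (k.descFactorial a : ℝ) * ((m+n-a).descFactorial (k-a) : ℝ)) •
            Ssum d m n ω q a := by
    rw [← Finset.sum_subset
      (Finset.filter_subset (fun x : ℕ × ℕ => x.1+x.2 ≤ k) (range (n+1) ×ˢ range (m+1))) (by
        intro x hx hxn
        have hxk : k < x.1 + x.2 := by
          by_contra hcon
          exact hxn (Finset.mem_filter.mpr ⟨hx, by omega⟩)
        rw [Nat.descFactorial_eq_zero_iff_lt.mpr hxk]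
        simp)]
    have hbij := Finset.sum_nbij'
      (i := fun y : Σ _ : ℕ, ℕ => ((y.1 - y.2, y.2) : ℕ × ℕ))
      (j := fun x : ℕ × ℕ => (⟨x.1 + x.2, x.2⟩ : Σ _ : ℕ, ℕ))
      (s := (range (k+1)).sigma (fun a => range (a+1)))
      (t := (range (n+1) ×ˢ range (m+1)).filter (fun x : ℕ × ℕ => x.1+x.2 ≤ k))
      (f := fun y : Σ _ : ℕ, ℕ =>
        (((-1:ℝ)^(k-y.1) * (k.descFactorial y.1 : ℝ) * ((m+n-y.1).descFactorial (k-y.1) : ℝ)) *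
          (ω (y.1-y.2) * (n.choose (y.1-y.2) : ℝ) * (m.choose y.2 : ℝ))) • q y.2)
      (g := fun x : ℕ × ℕ =>
        ((-1:ℝ)^(k-(x.1+x.2)) * (k.descFactorial (x.1+x.2) : ℝ) *
            (((n-x.1)+(m-x.2)).descFactorial (k-(x.1+x.2)) : ℝ)) •
          ((ω x.1 * (n.choose x.1 : ℝ) * (m.choose x.2 : ℝ)) • q x.2))
      (by
        intro y hy
        simp only [mem_sigma, mem_range] at hy
        simp only [mem_filter, mem_product, mem_range]
        omega)
      (by
        intro x hx
        simp only [mem_filter, mem_product, mem_range] at hx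
        simp only [mem_sigma, mem_range]
        omega)
      (by
        rintro ⟨a, j⟩ hy
        simp only [mem_sigma, mem_range] at hy
        have h : a - j + j = a := by omega
        simp [h])
      (by
        rintro ⟨x1, x2⟩ hx
        have h : x1 + x2 - x2 = x1 := by omega
        simp [h])
      (by
        rintro ⟨a, j⟩ hy
        simp only [mem_sigma, mem_range] at hy
        dsimp only
        rw [show (a - j) + j = a from by omega,
          show (n - (a - j)) + (m - j) = m + n - a from by omega, smul_smul])
    rw [← hbij,
      show (∑ a ∈ range (k+1),
          ((-1:ℝ)^(k-a) * (k.descFactorial a : ℝ) * ((m+n-a).descFactorial (k-a) : ℝ)) •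
            Ssum d m n ω q a)
        = ∑ a ∈ range (k+1), ∑ j ∈ range (a+1),
            (((-1:ℝ)^(k-a) * (k.descFactorial a : ℝ) * ((m+n-a).descFactorial (k-a) : ℝ)) *
              (ω (a-j) * (n.choose (a-j) : ℝ) * (m.choose j : ℝ))) • q j from by
        refine Finset.sum_congr rfl fun a _ => ?_
        simp only [Ssum, Finset.smul_sum, smul_smul]]
    exact Finset.sum_sigma _ _ _
  rw [hL, hR]
  -- inner sums of hq are (C(m+n,i))⁻¹ • S i
  have hInner : ∀ i, i < k →
      (∑ j ∈ range (i+1),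
          ((m.choose j : ℝ) * (n.choose (i-j)) / ((m+n).choose i) * ω (i-j)) • q j)
        = (((m+n).choose i : ℝ))⁻¹ • Ssum d m n ω q i := by
    intro i _
    simp only [Ssum, Finset.smul_sum]
    refine Finset.sum_congr rfl fun j _ => ?_
    rw [smul_smul]
    congr 1
    rw [div_eq_mul_inv]
    ring
  have hqk : (ω 0 * (m.choose k : ℝ)) • q k
      = (n.choose k : ℝ) •
          (∑ i ∈ range (k + 1), ((-1:ℝ) ^ (k - i) * (k.choose i)) • (ω i • p i))
        - ∑ i ∈ range k,
            (((m.choose i : ℝ) * (n.choose (k - i)) * ω (k - i)) • q i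
              + (((-1:ℝ) ^ (k + i) * ((m + n).choose k) * (k.choose i)) *
                  (((m+n).choose i : ℝ))⁻¹) • Ssum d m n ω q i) := by
    rw [hq k hk, smul_smul, mul_inv_cancel₀ hc, one_smul]
    congr 1
    refine Finset.sum_congr rfl fun i hi => ?_
    congr 1
    rw [hInner i (mem_range.mp hi), smul_smul]
  have hSk : Ssum d m n ω q k
      = (n.choose k : ℝ) •
          (∑ i ∈ range (k + 1), ((-1:ℝ) ^ (k - i) * (k.choose i)) • (ω i • p i))
        - ∑ i ∈ range k,
            ((((-1:ℝ) ^ (k + i) * ((m + n).choose k) * (k.choose i)) *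
                (((m+n).choose i : ℝ))⁻¹) • Ssum d m n ω q i) := by
    have hsplit : Ssum d m n ω q k
        = (∑ i ∈ range k, ((m.choose i : ℝ) * (n.choose (k - i)) * ω (k - i)) • q i)
          + (ω 0 * (m.choose k : ℝ)) • q k := by
      simp only [Ssum]
      rw [Finset.sum_range_succ]
      congr 1
      · refine Finset.sum_congr rfl fun j _ => ?_
        congr 1
        ring
      · rw [Nat.sub_self]
        simp only [Nat.choose_zero_right, Nat.cast_one]
        congr 1
        ring
    rw [hsplit, hqk, Finset.sum_add_distrib]
    abel
  -- final assembly
  rw [show (∑ a ∈ range (k+1),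
        ((-1:ℝ)^(k-a) * (k.descFactorial a : ℝ) * ((m+n-a).descFactorial (k-a) : ℝ)) •
          Ssum d m n ω q a)
      = (∑ a ∈ range k,
          ((-1:ℝ)^(k-a) * (k.descFactorial a : ℝ) * ((m+n-a).descFactorial (k-a) : ℝ)) •
            Ssum d m n ω q a) + (k.factorial : ℝ) • Ssum d m n ω q k from by
    rw [Finset.sum_range_succ]
    congr 1
    congr 1
    simp [Nat.sub_self, Nat.descFactorial_self]]
  rw [hSk, smul_sub, Finset.smul_sum]
  simp only [smul_smul]
  rw [show (∑ a ∈ range k,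
        ((-1:ℝ)^(k-a) * (k.descFactorial a : ℝ) * ((m+n-a).descFactorial (k-a) : ℝ)) •
          Ssum d m n ω q a)
      = ∑ a ∈ range k,
        ((k.factorial : ℝ) * ((-1:ℝ) ^ (k + a) * ((m + n).choose k) * (k.choose a) *
            (((m+n).choose a : ℝ))⁻¹)) • Ssum d m n ω q a from by
    refine Finset.sum_congr rfl fun a ha => ?_
    have hak : a ≤ k := (mem_range.mp ha).le
    congr 1
    have hKne : (((m+n).choose a : ℝ)) ≠ 0 :=
      Nat.cast_ne_zero.mpr (Nat.choose_pos (by omega)).ne'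
    have hcast := congrArg (Nat.cast (R := ℝ)) (nat_id hak (by omega : k ≤ m + n))
    push_cast at hcast
    have hsign : (-1:ℝ)^(k+a) = (-1:ℝ)^(k-a) := by
      rw [show k + a = (k-a) + 2*a from by omega, pow_add, pow_mul]
      norm_num
    rw [hsign]
    field_simp
    linear_combination hcast]
  rw [Finset.smul_sum, Finset.smul_sum]
  simp only [smul_smul]
  abel
end
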